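/- There exist real numbers a, b and a nonzero linear functional η₀ on V such that Ŝ(Y,Z) = a·g(Y,Z) + b·η₀(Y)η₀(Z) for all Y, Z ∈ V; that is, Ŝ has quasi-Einstein form. -/

import Mathlib

open scoped RealInnerProductSpace

/-- Let `(V, ⟪·,·⟫)` be a real inner product space of finite dimension `n ≥ 3`.
Let `Ŝ = S` be a symmetric bilinear form, `P ∈ V` a unit vector, `α = Ŝ(P,P) ≠ 0`, and suppose
`Ŝ(Y,Z)Ŝ(X,W) − Ŝ(X,Z)Ŝ(Y,W) = ρ(g(Y,Z)g(X,W) − g(X,Z)g(Y,W))` for all `X,Y,Z,W` and some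
`ρ ∈ ℝ`.  Then there exist reals `a, b` and a nonzero linear functional `η₀` on `V` such that
`Ŝ(Y,Z) = a·g(Y,Z) + b·η₀(Y)η₀(Z)` for all `Y, Z`; i.e. `Ŝ` has quasi-Einstein form. -/
theorem statement1 {V : Type*} [NormedAddCommGroup V] [InnerProductSpace ℝ V]
    [FiniteDimensional ℝ V] (h3 : 3 ≤ Module.finrank ℝ V)
    (S : V →ₗ[ℝ] V →ₗ[ℝ] ℝ) (hSsymm : ∀ X Y : V, S X Y = S Y X)
    (P : V) (hP : ⟪P, P⟫ = 1) (hα : S P P ≠ 0) (ρ : ℝ)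
    (hρ : ∀ X Y Z W : V,
      S Y Z * S X W - S X Z * S Y W =
        ρ * (⟪Y, Z⟫ * ⟪X, W⟫ - ⟪X, Z⟫ * ⟪Y, W⟫)) :
    ∃ (a b : ℝ) (η₀ : V →ₗ[ℝ] ℝ), η₀ ≠ 0 ∧
      ∀ Y Z : V, S Y Z = a * ⟪Y, Z⟫ + b * (η₀ Y * η₀ Z) := by
  classical
  -- Key step: `ρ * S P Q = 0` for every `Q` orthogonal to `P`.
  have key : ∀ Q : V, ⟪P, Q⟫ = 0 → ρ * S P Q = 0 := by
    intro Q hQ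
    -- find a nonzero vector orthogonal to both P and Q
    have hspan : Submodule.span ℝ ({P, Q} : Set V) ≠ ⊤ := by
      have : ({P, Q} : Set V).toFinset.card < Module.finrank ℝ V := by
        have hcard : ({P, Q} : Set V).toFinset.card ≤ 2 := by
          classical
          simp only [Set.toFinset_insert, Set.toFinset_singleton]
          exact (Finset.card_insert_le _ _).trans (by simp)
        omega
      exact (span_lt_top_of_card_lt_finrank this).ne
    have hbot : (Submodule.span ℝ ({P, Q} : Set V))ᗮ ≠ ⊥ := by
      intro h
      exact hspan (Submodule.orthogonal_eq_bot_iff.mp h)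
    obtain ⟨R, hR, hRne⟩ := Submodule.exists_mem_ne_zero_of_ne_bot hbot
    have hPmem : P ∈ Submodule.span ℝ ({P, Q} : Set V) :=
      Submodule.subset_span (by simp)
    have hQmem : Q ∈ Submodule.span ℝ ({P, Q} : Set V) :=
      Submodule.subset_span (by simp)
    have hPR : ⟪P, R⟫ = 0 := by
      have := (Submodule.mem_orthogonal _ R).mp hR P hPmem
      simpa [real_inner_comm] using this
    have hQR : ⟪Q, R⟫ = 0 := by
      have := (Submodule.mem_orthogonal _ R).mp hR Q hQmem
      simpa [real_inner_comm] using this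
    have hRR : ⟪R, R⟫ ≠ 0 := by
      simpa using (inner_self_ne_zero (𝕜 := ℝ)).mpr hRne
    have E1 := hρ P R Q R
    have E2 := hρ P R Q P
    have E3 := hρ P R R P
    rw [hP] at E2 E3
    have hRQ : ⟪R, Q⟫ = 0 := by rw [real_inner_comm]; exact hQR
    have hRPi : ⟪R, P⟫ = 0 := by rw [real_inner_comm]; exact hPR
    have hsym : S R P = S P R := hSsymm R P
    simp only [hRQ, hQ, hRPi, hPR, hsym] at E1 E2 E3
    -- Combine to get ρ * S P Q * ⟪R,R⟫ = 0
    have hmain : ρ * S P Q * ⟪R, R⟫ = 0 := by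
      linear_combination -((S P P) * E1 - (S P R) * E2 + (S P Q) * E3)
    rcases mul_eq_zero.mp hmain with h | h
    · exact h
    · exact absurd h hRR
  -- hence `ρ * S P Z = ρ * S P P * ⟪P, Z⟫` for all Z
  have claim : ∀ Z : V, ρ * S P Z = ρ * S P P * ⟪P, Z⟫ := by
    intro Z
    have horto : ⟪P, Z - ⟪P, Z⟫ • P⟫ = 0 := by
      rw [inner_sub_right, real_inner_smul_right, hP]; ring
    have := key (Z - ⟪P, Z⟫ • P) horto
    have hlin : S P (Z - ⟪P, Z⟫ • P) = S P Z - ⟪P, Z⟫ * S P P := by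
      simp
    rw [hlin] at this
    linarith [this]
  refine ⟨ρ / S P P, 1 / S P P - ρ / (S P P) ^ 3, S P, ?_, ?_⟩
  · intro h
    exact hα (by rw [h]; simp)
  · intro Y Z
    have h1 := hρ P Y Z P
    rw [hP] at h1
    have hsym1 : S Y P = S P Y := hSsymm Y P
    rw [hsym1] at h1
    have hYP : ⟪Y, P⟫ = ⟪P, Y⟫ := real_inner_comm P Y
    rw [hYP] at h1
    have cY := claim Y
    have cZ := claim Z
    have hfinal : S Y Z * (S P P) ^ 3 =
        ρ * ⟪Y, Z⟫ * (S P P) ^ 2 + ((S P P) ^ 2 - ρ) * (S P Y * S P Z) := by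
      linear_combination (S P P) ^ 2 * h1 + (S P Z) * cY + (S P P * ⟪P, Y⟫) * cZ
    field_simp
    linear_combination hfinal
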